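/- With the substitution s(G) = YBG, s(Y) = YBG, s(B) = BO, s(O) = YBO, the number of occurrences of the letter B in sⁿ(G) equals F(2n), where F is the Fibonacci sequence with F(0) = 0, F(1) = 1. -/

import Mathlib

inductive HepLetter : Type
  | G | Y | B | O
deriving DecidableEq

def hepSub : HepLetter → List HepLetter
  | HepLetter.G => [HepLetter.Y, HepLetter.B, HepLetter.G]
  | HepLetter.Y => [HepLetter.Y, HepLetter.B, HepLetter.G]
  | HepLetter.B => [HepLetter.B, HepLetter.O]
  | HepLetter.O => [HepLetter.Y, HepLetter.B, HepLetter.O]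

def hepStep (w : List HepLetter) : List HepLetter := w.flatMap hepSub

open HepLetter in
lemma hepStep_counts (w : List HepLetter) :
    (hepStep w).count B = w.count G + w.count Y + w.count B + w.count O ∧
    (hepStep w).count G + (hepStep w).count Y + (hepStep w).count O =
      2 * (w.count G + w.count Y + w.count O) + w.count B := by
  induction w with
  | nil => simp [hepStep]
  | cons a w ih =>
    have h : hepStep (a :: w) = hepSub a ++ hepStep w := rfl
    cases a <;> simp [h, hepSub, List.count_append, List.count_cons] <;> omega

open HepLetter in
theorem hep_count_B_fib (n : ℕ) :
    (hepStep^[n] [HepLetter.G]).count HepLetter.B = Nat.fib (2 * n) := by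
  suffices h : ∀ n, (hepStep^[n] [G]).count B = Nat.fib (2 * n) ∧
      (hepStep^[n] [G]).count G + (hepStep^[n] [G]).count Y +
        (hepStep^[n] [G]).count O = Nat.fib (2 * n + 1) from (h n).1
  intro n
  induction n with
  | zero => simp [List.count_cons]
  | succ n ih =>
    have hit : hepStep^[n + 1] [G] = hepStep (hepStep^[n] [G]) :=
      Function.iterate_succ_apply' _ _ _
    obtain ⟨h1, h2⟩ := hepStep_counts (hepStep^[n] [G])
    have e1 : 2 * (n + 1) = 2 * n + 1 + 1 := by ring
    have e2 : 2 * (n + 1) + 1 = 2 * n + 1 + 1 + 1 := by ring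
    rw [hit]
    constructor
    · rw [e1, Nat.fib_add_two]
      omega
    · rw [e2, Nat.fib_add_two, Nat.fib_add_two]
      omega
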